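/- Angle between a tangent line and a chord: let O be a point of the oriented Euclidean plane, r > 0, and let X, Y be distinct points with dist O X = dist O Y = r. Let Q be a point with Q ≠ X and ⟪Q - X, O - X⟫ = 0 (so the line (X Q) is tangent at X to the circle with center O through X and Y). Then (2 : ℤ) • ∡ Q X Y = ∡ X O Y as oriented angles. -/

import Mathlib

open EuclideanGeometry
open scoped RealInnerProductSpace Real

noncomputable instance : Fact (Module.finrank ℝ (EuclideanSpace ℝ (Fin 2)) = 2) :=
  ⟨finrank_euclideanSpace_fin⟩

noncomputable instance : Module.Oriented ℝ (EuclideanSpace ℝ (Fin 2)) (Fin 2) :=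
  ⟨Module.Basis.orientation (EuclideanSpace.basisFun (Fin 2) ℝ).toBasis⟩

theorem tangent_chord_angle (O X Y Q : EuclideanSpace ℝ (Fin 2)) (r : ℝ) (hr : 0 < r)
    (hXY : X ≠ Y) (hX : dist O X = r) (hY : dist O Y = r)
    (hQX : Q ≠ X) (htan : ⟪Q - X, O - X⟫ = 0) :
    (2 : ℤ) • ∡ Q X Y = ∡ X O Y := by
  have hOX : O ≠ X := by
    intro h; rw [h, dist_self] at hX; exact absurd hX (ne_of_lt hr)
  have hQXO : ∡ Q X O = (π / 2 : ℝ) ∨ ∡ Q X O = (-π / 2 : ℝ) := by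
    have := (Orientation.eq_zero_or_oangle_eq_iff_inner_eq_zero
      (Module.Oriented.positiveOrientation)
      (x := Q -ᵥ X) (y := O -ᵥ X)).2 htan
    rcases this with h | h | h | h
    · exact absurd (vsub_eq_zero_iff_eq.1 h) hQX
    · exact absurd (vsub_eq_zero_iff_eq.1 h) hOX
    · exact Or.inl h
    · exact Or.inr h
  have hsplit : ∡ Q X Y = ∡ Q X O + ∡ O X Y := (oangle_add hQX hOX hXY.symm).symm
  have h2QXO : (2 : ℤ) • ∡ Q X O = (π : Real.Angle) := by
    rcases hQXO with h | h <;> rw [h]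
    · rw [Real.Angle.two_zsmul_coe_div_two]
    · rw [show (-π / 2 : ℝ) = (-π) / 2 by ring, Real.Angle.two_zsmul_coe_div_two]
      exact Real.Angle.neg_coe_pi
  have hcenter : ∡ X O Y = π - (2 : ℤ) • ∡ Y X O := by
    have hXs : X ∈ Metric.sphere O r := by rw [Metric.mem_sphere, dist_comm]; exact hX
    have hYs : Y ∈ Metric.sphere O r := by rw [Metric.mem_sphere, dist_comm]; exact hY
    exact Sphere.oangle_eq_pi_sub_two_zsmul_oangle_center_right
      (s := ⟨O, r⟩) hXs hYs hXY
  rw [hsplit, smul_add, h2QXO, hcenter, oangle_rev Y X O, smul_neg]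
  exact (sub_eq_add_neg _ _).symm
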